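/- For every k > 0 and ρ ∈ (0,1), the function g_{k,ρ} is strictly increasing on ℝ, tends to 0 as x → −∞, and tends to +∞ as x → +∞; consequently, for every c > 0 there exists a unique x ∈ ℝ with g_{k,ρ}(x) = c. -/

import Mathlib

open MeasureTheory Real Set Filter

/-- Standard normal density. -/
noncomputable def stdPhi (x : ℝ) : ℝ := (Real.sqrt (2 * Real.pi))⁻¹ * Real.exp (-x ^ 2 / 2)

/-- Standard normal CDF. -/
noncomputable def stdPhiCDF (x : ℝ) : ℝ := ∫ u in Set.Iic x, stdPhi u

/-- Normalized expected-profit function `g_{k,ρ}`. -/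
noncomputable def gkr (k ρ x : ℝ) : ℝ :=
  Real.exp (k * x + k ^ 2 * (1 - ρ ^ 2) / 2) *
      stdPhiCDF ((x + k * (1 - ρ ^ 2)) / Real.sqrt (1 - ρ ^ 2)) -
    stdPhiCDF (x / Real.sqrt (1 - ρ ^ 2))

lemma stdPhi_pos (x : ℝ) : 0 < stdPhi x := by
  have h2π : (0:ℝ) < 2 * Real.pi := by positivity
  exact mul_pos (inv_pos.2 (Real.sqrt_pos.2 h2π)) (Real.exp_pos _)

lemma stdPhi_continuous : Continuous stdPhi := by
  unfold stdPhi
  fun_prop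

lemma stdPhi_integrable : Integrable stdPhi := by
  have h : Integrable (fun x : ℝ => Real.exp (-(1/2 : ℝ) * x ^ 2)) :=
    integrable_exp_neg_mul_sq (by norm_num)
  have := h.const_mul ((Real.sqrt (2 * Real.pi))⁻¹)
  refine this.congr ?_
  filter_upwards with x
  unfold stdPhi
  congr 1
  ring_nf

lemma stdPhiCDF_eq (y : ℝ) :
    stdPhiCDF y = stdPhiCDF 0 + ∫ t in (0:ℝ)..y, stdPhi t := by
  have h := intervalIntegral.integral_Iic_sub_Iic
    (stdPhi_integrable.integrableOn (s := Set.Iic 0))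
    (stdPhi_integrable.integrableOn (s := Set.Iic y)) (μ := volume)
  unfold stdPhiCDF
  linarith [h]

lemma hasDerivAt_stdPhiCDF (x : ℝ) : HasDerivAt stdPhiCDF (stdPhi x) x := by
  have h : HasDerivAt (fun y => stdPhiCDF 0 + ∫ t in (0:ℝ)..y, stdPhi t) (stdPhi x) x := by
    refine HasDerivAt.const_add _ ?_
    exact intervalIntegral.integral_hasDerivAt_right
      (stdPhi_integrable.intervalIntegrable)
      (stdPhi_continuous.stronglyMeasurableAtFilter _ _)
      stdPhi_continuous.continuousAt
  exact h.congr_of_eventuallyEq (by filter_upwards with y; exact stdPhiCDF_eq y)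

lemma stdPhiCDF_strictMono : StrictMono stdPhiCDF :=
  strictMono_of_deriv_pos fun x => by
    rw [(hasDerivAt_stdPhiCDF x).deriv]; exact stdPhi_pos x

lemma stdPhiCDF_pos (x : ℝ) : 0 < stdPhiCDF x := by
  unfold stdPhiCDF
  rw [setIntegral_pos_iff_support_of_nonneg_ae
    (Filter.Eventually.of_forall fun y => (stdPhi_pos y).le)
    (stdPhi_integrable.integrableOn)]
  have : Function.support stdPhi = Set.univ := by
    ext y; simp [(stdPhi_pos y).ne']
  rw [this, Set.univ_inter]
  simp

lemma stdPhiCDF_le_one (x : ℝ) : stdPhiCDF x ≤ 1 := by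
  have htot : ∫ u, stdPhi u = 1 := by
    unfold stdPhi
    rw [MeasureTheory.integral_const_mul]
    have : ∀ u : ℝ, Real.exp (-u ^ 2 / 2) = Real.exp (-(1/2 : ℝ) * u ^ 2) := by
      intro u; ring_nf
    simp_rw [this]
    rw [integral_gaussian]
    rw [show Real.pi / (1/2 : ℝ) = 2 * Real.pi by ring]
    rw [inv_mul_cancel₀ (Real.sqrt_ne_zero'.2 (by positivity))]
  calc stdPhiCDF x ≤ ∫ u, stdPhi u :=
        setIntegral_le_integral stdPhi_integrable
          (Filter.Eventually.of_forall fun y => (stdPhi_pos y).le)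
    _ = 1 := htot

lemma stdPhiCDF_tendsto_atBot : Filter.Tendsto stdPhiCDF Filter.atBot (nhds 0) := by
  have h : Filter.Tendsto (fun x : ℝ => ∫ t in x..(0:ℝ), stdPhi t) Filter.atBot
      (nhds (stdPhiCDF 0)) :=
    MeasureTheory.intervalIntegral_tendsto_integral_Iic 0
      stdPhi_integrable.integrableOn tendsto_id
  have h2 : Filter.Tendsto (fun x : ℝ => stdPhiCDF 0 - ∫ t in x..(0:ℝ), stdPhi t)
      Filter.atBot (nhds 0) := by
    have := (tendsto_const_nhds (x := stdPhiCDF 0) (f := Filter.atBot (α := ℝ))).sub h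
    simpa using this
  refine h2.congr fun x => ?_
  rw [stdPhiCDF_eq x, intervalIntegral.integral_symm]
  ring

theorem gkr_strictMono_tendsto_unique_root
    (k ρ : ℝ) (hk : 0 < k) (hρ : ρ ∈ Set.Ioo (0 : ℝ) 1) :
    StrictMono (gkr k ρ) ∧
    Filter.Tendsto (gkr k ρ) Filter.atBot (nhds 0) ∧
    Filter.Tendsto (gkr k ρ) Filter.atTop Filter.atTop ∧
    (∀ c : ℝ, 0 < c → ∃! x : ℝ, gkr k ρ x = c) := by
  obtain ⟨hρ0, hρ1⟩ := hρ
  set E : ℝ := 1 - ρ ^ 2 with hEdef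
  have hE : 0 < E := by nlinarith
  set σ : ℝ := Real.sqrt E with hσdef
  have hσ : 0 < σ := Real.sqrt_pos.2 hE
  have hσsq : σ ^ 2 = E := Real.sq_sqrt hE.le
  -- key cancellation identity
  have key : ∀ x : ℝ, Real.exp (k * x + k ^ 2 * E / 2) * stdPhi ((x + k * E) / σ)
      = stdPhi (x / σ) := by
    intro x
    unfold stdPhi
    rw [mul_left_comm, ← Real.exp_add]
    congr 2
    rw [div_pow, div_pow, hσsq]
    field_simp
    ring
  -- derivative of gkr
  have hderiv : ∀ x : ℝ, HasDerivAt (gkr k ρ)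
      (k * Real.exp (k * x + k ^ 2 * E / 2) * stdPhiCDF ((x + k * E) / σ)) x := by
    intro x
    have h1 : HasDerivAt (fun x : ℝ => k * x + k ^ 2 * E / 2) k x := by
      simpa using ((hasDerivAt_id x).const_mul k).add_const (k ^ 2 * E / 2)
    have hexp := h1.exp
    have hA : HasDerivAt (fun x : ℝ => (x + k * E) / σ) (1 / σ) x := by
      simpa using ((hasDerivAt_id x).add_const (k * E)).div_const σ
    have hB : HasDerivAt (fun x : ℝ => x / σ) (1 / σ) x := by
      simpa using (hasDerivAt_id x).div_const σ
    have hΦA := (hasDerivAt_stdPhiCDF ((x + k * E) / σ)).comp x hA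
    have hΦB := (hasDerivAt_stdPhiCDF (x / σ)).comp x hB
    have h := (hexp.mul hΦA).sub hΦB
    have heq : Real.exp (k * x + k ^ 2 * E / 2) * k * stdPhiCDF ((x + k * E) / σ) +
        Real.exp (k * x + k ^ 2 * E / 2) * (stdPhi ((x + k * E) / σ) * (1 / σ)) -
        stdPhi (x / σ) * (1 / σ)
        = k * Real.exp (k * x + k ^ 2 * E / 2) * stdPhiCDF ((x + k * E) / σ) := by
      rw [← mul_assoc, key x]
      ring
    simp only [Function.comp_def] at h
    rw [heq] at h
    exact h.congr_of_eventuallyEq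
      (Filter.Eventually.of_forall fun y => by simp [gkr, ← hEdef, ← hσdef])
  have hmono : StrictMono (gkr k ρ) :=
    strictMono_of_deriv_pos fun x => by
      rw [(hderiv x).deriv]
      exact mul_pos (mul_pos hk (Real.exp_pos _)) (stdPhiCDF_pos _)
  -- tendsto at atBot
  have hexpBot : Filter.Tendsto (fun x : ℝ => Real.exp (k * x + k ^ 2 * E / 2))
      Filter.atBot (nhds 0) := by
    apply Real.tendsto_exp_atBot.comp
    apply Filter.tendsto_atBot_add_const_right
    exact Filter.Tendsto.const_mul_atBot hk tendsto_id
  have hbot : Filter.Tendsto (gkr k ρ) Filter.atBot (nhds 0) := by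
    have hT1 : Filter.Tendsto
        (fun x : ℝ => Real.exp (k * x + k ^ 2 * E / 2) * stdPhiCDF ((x + k * E) / σ))
        Filter.atBot (nhds 0) := by
      refine squeeze_zero (g := fun x : ℝ => Real.exp (k * x + k ^ 2 * E / 2))
        (fun x => mul_nonneg (Real.exp_pos _).le (stdPhiCDF_pos _).le)
        (fun x => ?_) hexpBot
      have := stdPhiCDF_le_one ((x + k * E) / σ)
      nlinarith [Real.exp_pos (k * x + k ^ 2 * E / 2)]
    have hT2 : Filter.Tendsto (fun x : ℝ => stdPhiCDF (x / σ)) Filter.atBot (nhds 0) := by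
      apply stdPhiCDF_tendsto_atBot.comp
      exact Filter.tendsto_id.atBot_div_const hσ
    have := hT1.sub hT2
    rw [sub_zero] at this
    exact this.congr fun y => by simp [gkr, ← hEdef, ← hσdef]
  -- tendsto atTop
  have htop : Filter.Tendsto (gkr k ρ) Filter.atTop Filter.atTop := by
    have hlow : Filter.Tendsto
        (fun x : ℝ => Real.exp (k * x + k ^ 2 * E / 2) * stdPhiCDF 0 - 1)
        Filter.atTop Filter.atTop := by
      apply Filter.tendsto_atTop_add_const_right
      apply Filter.Tendsto.atTop_mul_const (stdPhiCDF_pos 0)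
      apply Real.tendsto_exp_atTop.comp
      apply Filter.tendsto_atTop_add_const_right
      exact Filter.Tendsto.const_mul_atTop hk tendsto_id
    apply Filter.tendsto_atTop_mono' _ _ hlow
    filter_upwards [Filter.eventually_ge_atTop (0:ℝ)] with x hx
    have hA0 : (0:ℝ) ≤ (x + k * E) / σ := by positivity
    have h1 : stdPhiCDF 0 ≤ stdPhiCDF ((x + k * E) / σ) :=
      stdPhiCDF_strictMono.monotone hA0
    have h2 : stdPhiCDF (x / σ) ≤ 1 := stdPhiCDF_le_one _
    unfold gkr
    rw [← hEdef, ← hσdef]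
    nlinarith [Real.exp_pos (k * x + k ^ 2 * E / 2)]
  -- unique root
  refine ⟨hmono, hbot, htop, fun c hc => ?_⟩
  have hcont : Continuous (gkr k ρ) :=
    continuous_iff_continuousAt.2 fun x => (hderiv x).differentiableAt.continuousAt
  obtain ⟨a, ha⟩ := (hbot.eventually_lt_const hc).exists
  obtain ⟨b, hb⟩ := (htop.eventually_gt_atTop c).exists
  have hab : a ≤ b := (hmono.lt_iff_lt.1 (ha.trans hb)).le
  have hmem : c ∈ Set.Icc (gkr k ρ a) (gkr k ρ b) := ⟨ha.le, hb.le⟩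
  obtain ⟨x, _, hx⟩ := intermediate_value_Icc hab (hcont.continuousOn) hmem
  exact ⟨x, hx, fun y hy => hmono.injective (hy.trans hx.symm)⟩
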